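/- Let {G_n}_{n≥1} be a sequence of random multigraphs, G_n on n nodes with degree sequence (D_1, …, D_n), satisfying: (i) there exist a probability mass function f on the nonnegative integers with size-biased version f^*(k) = k f(k)/(Σ_ℓ ℓ f(ℓ)) and constants α, ε > 0 such that P(max{d₁(f_n, f), d_tv(f_n^*, f^*)} > n^{-ε}) = O(n^{-α}); (ii) there exist a joint probability mass function h(k, ℓ) on the positive integers and κ > 0 such that P(Σ_{k,ℓ≥1} |h_n(k,ℓ) − h(k,ℓ)| 1{f_n(k) > 0} > n^{-κ}) → 0; (iii) Σ_k k^{1+η} f(k) < ∞ for some 0 < η < 1. Define Θ(k) = 1{f(k) > 0} (Σ_{ℓ≥1} h(k,ℓ) F^*(ℓ))/f^*(k), where F^* is the cdf of f^*. Then for each fixed k with f(k) > 0 and each 0 < δ < min{ε, η/(8+4η), κ}, lim_{n→∞} P(|Θ_n(k) − Θ(k)| > n^{-δ}) = 0. -/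

import Mathlib

open MeasureTheory Filter
open scoped ENNReal NNReal BigOperators

namespace ANNDPaper

/-- A function is slowly varying if `l (λ x) / l x → 1` as `x → ∞` for every `λ > 0`. -/
def SlowlyVarying (l : ℝ → ℝ) : Prop :=
  ∀ lam : ℝ, 0 < lam → Tendsto (fun x => l (lam * x) / l x) atTop (nhds 1)

/-- A function is eventually monotone if it is monotone on some interval `[K, ∞)`. -/
def EventuallyMonotone (l : ℝ → ℝ) : Prop :=
  ∃ K : ℝ, MonotoneOn l (Set.Ici K) ∨ AntitoneOn l (Set.Ici K)

/-- Cumulative distribution function of a mass function on `ℕ`. -/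
noncomputable def cdfOf (f : ℕ → ℝ) (k : ℕ) : ℝ := ∑ j ∈ Finset.range (k + 1), f j

/-- Kantorovich–Rubinstein distance between two mass functions on `ℕ`,
valued in `ℝ≥0∞`. -/
noncomputable def d1 (f g : ℕ → ℝ) : ℝ≥0∞ :=
  ∑' k : ℕ, ENNReal.ofReal |cdfOf f k - cdfOf g k|

/-- Total variation distance between two mass functions on `ℕ`, valued in `ℝ≥0∞`. -/
noncomputable def dtv (f g : ℕ → ℝ) : ℝ≥0∞ :=
  (∑' k : ℕ, ENNReal.ofReal |f k - g k|) / 2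

/-- Mean of a mass function on `ℕ`. -/
noncomputable def meanPMF (f : ℕ → ℝ) : ℝ := ∑' k : ℕ, (k : ℝ) * f k

/-- Size-biased version `f^*(k) = k f(k) / E[f]` of a mass function on `ℕ`. -/
noncomputable def sizeBiased (f : ℕ → ℝ) (k : ℕ) : ℝ := (k : ℝ) * f k / meanPMF f

/-- `L_n`, the sum of the degrees. -/
def degSum {n : ℕ} (d : Fin n → ℕ) : ℕ := ∑ i, d i

/-- Empirical degree density `f_n(k)`. -/
noncomputable def empDens {n : ℕ} (d : Fin n → ℕ) (k : ℕ) : ℝ :=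
  (∑ i, if d i = k then (1 : ℝ) else 0) / (n : ℝ)

/-- Size-biased empirical degree density `f_n^*(k)`. -/
noncomputable def empSB {n : ℕ} (d : Fin n → ℕ) (k : ℕ) : ℝ :=
  (∑ i, if d i = k then (k : ℝ) else 0) / (degSum d : ℝ)

/-- Size-biased empirical cumulative distribution function `F_n^*(ℓ)`. -/
noncomputable def empSBcdf {n : ℕ} (d : Fin n → ℕ) (l : ℕ) : ℝ :=
  (∑ i, if d i ≤ l then (d i : ℝ) else 0) / (degSum d : ℝ)

/-- Empirical joint degree distribution `h_n(k, ℓ)` of a multigraph with degrees `d`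
and edge counts `g` (self-loops counted twice). -/
noncomputable def jointDens {n : ℕ} (d : Fin n → ℕ) (g : Fin n → Fin n → ℕ) (k l : ℕ) : ℝ :=
  (∑ i, ∑ j, if d i = k ∧ d j = l then (g i j : ℝ) else 0) / (degSum d : ℝ)

/-- Average nearest neighbor degree `Φ_n(k)`. -/
noncomputable def ANND {n : ℕ} (d : Fin n → ℕ) (g : Fin n → Fin n → ℕ) (k : ℕ) : ℝ :=
  if 0 < empDens d k then (∑' l : ℕ, jointDens d g k l * (l : ℝ)) / empSB d k else 0

/-- Average nearest neighbor rank `Θ_n(k)`. -/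
noncomputable def ANNR {n : ℕ} (d : Fin n → ℕ) (g : Fin n → Fin n → ℕ) (k : ℕ) : ℝ :=
  if 0 < empDens d k then (∑' l : ℕ, jointDens d g k l * empSBcdf d l) / empSB d k else 0

/-- The degree of node `i` in a multigraph with edge counts `g` (self-loops counted twice). -/
def degOf {n : ℕ} (g : Fin n → Fin n → ℕ) (i : Fin n) : ℕ := ∑ j, g i j

/-- Erased edge counts: self-loops removed, multiple edges merged. -/
def erase {n : ℕ} (g : Fin n → Fin n → ℕ) (i j : Fin n) : ℕ :=
  if i = j then 0 else min (g i j) 1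

/-- Degrees after erasure. -/
def eraseDeg {n : ℕ} (g : Fin n → Fin n → ℕ) (i : Fin n) : ℕ := ∑ j, erase g i j

/-- The stubs (half-edges) attached to the nodes, given a degree sequence `d`. -/
abbrev Stubs {n : ℕ} (d : Fin n → ℕ) : Type := (i : Fin n) × Fin (d i)

/-- A perfect matching of the stubs: a fixed-point-free involution. -/
def Matching {n : ℕ} (d : Fin n → ℕ) : Type :=
  {σ : Equiv.Perm (Stubs d) // ∀ s, σ s ≠ s ∧ σ (σ s) = s}

instance {n : ℕ} (d : Fin n → ℕ) : MeasurableSpace (Matching d) := ⊤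

/-- The uniform probability measure on perfect matchings of the stubs. -/
noncomputable def uniformMatching {n : ℕ} (d : Fin n → ℕ) : Measure (Matching d) :=
  (Nat.card (Matching d) : ℝ≥0∞)⁻¹ • Measure.count

/-- The edge counts `G_{ij}` of the configuration-model multigraph determined by a
matching of the stubs: the number of stubs of `i` matched to stubs of `j`
(self-loops are automatically counted twice). -/
def cmEdges {n : ℕ} (d : Fin n → ℕ) (σ : Matching d) (i j : Fin n) : ℕ :=
  (Finset.univ.filter (fun s : Fin (d i) => ((σ.1 ⟨i, s⟩).1 = j))).card

/-- Parity correction: add `1` to the last coordinate if the total sum is odd,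
making the total even. -/
def parityFix (n : ℕ) (x : Fin n → ℕ) (i : Fin n) : ℕ :=
  if (i : ℕ) = n - 1 ∧ (∑ j, x j) % 2 = 1 then x i + 1 else x i

/-- The law of the degree sequence `IID(𝒟)` of length `n`, where `ν` is the law of `𝒟`:
i.i.d. samples with the last one corrected for parity. -/
noncomputable def iidLaw (n : ℕ) (ν : Measure ℕ) : Measure (Fin n → ℕ) :=
  Measure.map (parityFix n) (Measure.pi fun _ : Fin n => ν)

/-- The joint law of (degree sequence, edge counts) in the configuration model of size `n`
with degree sequence `IID(𝒟)`, where `ν` is the law of `𝒟`: sample the degrees, then an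
independent uniform perfect matching of the stubs. -/
noncomputable def cmLaw (n : ℕ) (ν : Measure ℕ) :
    Measure ((Fin n → ℕ) × (Fin n → Fin n → ℕ)) :=
  (iidLaw n ν).bind fun d => (uniformMatching d).map fun σ => (d, cmEdges d σ)


section AuxLemmas

lemma ratio_bound {a b an bn e1 e2 : ℝ} (hb : 0 < b) (hbn : b/2 ≤ bn)
    (ha0 : 0 ≤ a) (ha1 : a ≤ 1) (h1 : |an - a| ≤ e1) (h2 : |bn - b| ≤ e2) :
    |an/bn - a/b| ≤ 2*e1/b + 2*e2/(b*b) := by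
  have hbn0 : 0 < bn := lt_of_lt_of_le (by linarith) hbn
  have key : an/bn - a/b = ((an - a)*b + a*(b - bn))/(bn*b) := by
    field_simp; ring
  rw [key, abs_div, abs_of_pos (mul_pos hbn0 hb)]
  have he1 : 0 ≤ e1 := le_trans (abs_nonneg _) h1
  have he2 : 0 ≤ e2 := le_trans (abs_nonneg _) h2
  have hnum : |(an - a) * b + a * (b - bn)| ≤ e1*b + e2 := by
    calc |(an - a) * b + a * (b - bn)|
        ≤ |(an - a) * b| + |a * (b - bn)| := abs_add_le _ _
    _ = |an - a| * b + a * |bn - b| := by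
        rw [abs_mul, abs_mul, abs_of_pos hb, abs_of_nonneg ha0, abs_sub_comm b bn]
    _ ≤ e1*b + e2 := by nlinarith [abs_nonneg (bn-b)]
  calc |(an - a) * b + a * (b - bn)| / (bn*b) ≤ (e1*b + e2)/((b/2)*b) := by
        apply div_le_div₀ (by nlinarith) hnum (by nlinarith)
        nlinarith
  _ = 2*e1/b + 2*e2/(b*b) := by field_simp

lemma dtv_finset_bound {p q : ℕ → ℝ} {c : ℝ} (hc : 0 ≤ c)
    (hd : dtv p q ≤ ENNReal.ofReal c) (s : Finset ℕ) :
    ∑ j ∈ s, |p j - q j| ≤ 2*c := by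
  have hT : (∑' j : ℕ, ENNReal.ofReal |p j - q j|) ≤ ENNReal.ofReal (2*c) := by
    have h2 := (ENNReal.div_le_iff_le_mul (Or.inl two_ne_zero)
      (Or.inl (by norm_num))).mp hd
    calc (∑' j : ℕ, ENNReal.ofReal |p j - q j|) ≤ ENNReal.ofReal c * 2 := h2
    _ = ENNReal.ofReal (2*c) := by
        rw [ENNReal.ofReal_mul (by norm_num : (0:ℝ) ≤ 2)]
        rw [ENNReal.ofReal_ofNat]; ring
  have hs : ENNReal.ofReal (∑ j ∈ s, |p j - q j|) ≤ ENNReal.ofReal (2*c) := by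
    rw [ENNReal.ofReal_sum_of_nonneg (fun i _ => abs_nonneg _)]
    exact le_trans (ENNReal.sum_le_tsum s) hT
  exact (ENNReal.ofReal_le_ofReal_iff (by linarith)).mp hs

variable {n : ℕ}

lemma jointDens_nonneg (d : Fin n → ℕ) (g : Fin n → Fin n → ℕ) (k l : ℕ) :
    0 ≤ jointDens d g k l := by
  apply div_nonneg _ (Nat.cast_nonneg _)
  apply Finset.sum_nonneg; intro i _
  apply Finset.sum_nonneg; intro j _
  split <;> positivity

lemma empSB_nonneg (d : Fin n → ℕ) (k : ℕ) : 0 ≤ empSB d k := by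
  apply div_nonneg _ (Nat.cast_nonneg _)
  apply Finset.sum_nonneg; intro i _; split <;> positivity

lemma empSBcdf_nonneg (d : Fin n → ℕ) (l : ℕ) : 0 ≤ empSBcdf d l := by
  apply div_nonneg _ (Nat.cast_nonneg _)
  apply Finset.sum_nonneg; intro i _; split <;> positivity

lemma empSBcdf_le_one (d : Fin n → ℕ) (l : ℕ) : empSBcdf d l ≤ 1 := by
  unfold empSBcdf
  rcases eq_or_ne (degSum d) 0 with h0 | h0
  · simp [h0]
  · rw [div_le_one (by exact_mod_cast Nat.pos_of_ne_zero h0)]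
    calc (∑ i, if d i ≤ l then (d i:ℝ) else 0) ≤ ∑ i, (d i : ℝ) := by
          apply Finset.sum_le_sum; intro i _
          split
          · exact le_refl _
          · positivity
    _ = (degSum d : ℝ) := by rw [degSum]; push_cast; rfl

lemma empSBcdf_eq_sum (d : Fin n → ℕ) (l : ℕ) :
    empSBcdf d l = ∑ j ∈ Finset.range (l+1), empSB d j := by
  unfold empSBcdf empSB
  rw [← Finset.sum_div]
  congr 1
  rw [Finset.sum_comm]
  apply Finset.sum_congr rfl
  intro i _
  rw [Finset.sum_ite_eq (Finset.range (l+1)) (d i) (fun j => (j:ℝ))]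
  simp [Finset.mem_range, Nat.lt_succ_iff]

lemma jointDens_eq_zero_of_gt (d : Fin n → ℕ) (g : Fin n → Fin n → ℕ) (k : ℕ)
    {l : ℕ} (hl : degSum d < l) : jointDens d g k l = 0 := by
  unfold jointDens
  rw [Finset.sum_eq_zero, zero_div]
  intro i _
  apply Finset.sum_eq_zero
  intro j _
  rw [if_neg]
  rintro ⟨-, hj⟩
  have h1 : d j ≤ ∑ i, d i :=
    Finset.single_le_sum (fun i _ => Nat.zero_le _) (Finset.mem_univ j)
  have h2 : d j ≤ degSum d := h1
  omega

lemma summable_jointDens_mul (d : Fin n → ℕ) (g : Fin n → Fin n → ℕ) (k : ℕ)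
    (c : ℕ → ℝ) : Summable (fun l => jointDens d g k l * c l) := by
  apply summable_of_ne_finset_zero (s := Finset.range (degSum d + 1))
  intro l hl
  simp only [Finset.mem_range] at hl
  rw [jointDens_eq_zero_of_gt d g k (by omega), zero_mul]

lemma exists_of_empDens_pos {d : Fin n → ℕ} {k : ℕ} (h : 0 < empDens d k) :
    ∃ i, d i = k := by
  by_contra hc
  push_neg at hc
  have h0 : empDens d k = 0 := by
    unfold empDens
    rw [Finset.sum_eq_zero (fun i _ => if_neg (hc i)), zero_div]
  rw [h0] at h; exact lt_irrefl 0 h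

lemma exists_of_empSB_pos {d : Fin n → ℕ} {k : ℕ} (h : 0 < empSB d k) :
    ∃ i, d i = k := by
  by_contra hc
  push_neg at hc
  have h0 : empSB d k = 0 := by
    unfold empSB
    rw [Finset.sum_eq_zero (fun i _ => if_neg (hc i)), zero_div]
  rw [h0] at h; exact lt_irrefl 0 h

lemma empDens_pos_of_exists {d : Fin n → ℕ} {k : ℕ} (i : Fin n) (hi : d i = k) :
    0 < empDens d k := by
  have hn : (0:ℝ) < n := by exact_mod_cast i.pos
  apply div_pos _ hn
  have h1 := Finset.single_le_sum (f := fun i' => if d i' = k then (1:ℝ) else 0)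
      (fun i' _ => by split <;> norm_num) (Finset.mem_univ i)
  simp only [if_pos hi] at h1
  linarith

end AuxLemmas

/-- General convergence of the ANNR: for a sequence of random multigraphs
satisfying the degree regularity assumption (with total variation for the size-biased
density), the joint-distribution regularity assumption, and a finite `(1+η)`-moment of the
limiting degree distribution, `P(|Θ_n(k) − Θ(k)| > n^{-δ}) → 0` for every fixed `k` with
`f(k) > 0` and every `0 < δ < min{ε, η/(8+4η), κ}`. -/
theorem stmt10
    {Ω : Type*} [MeasurableSpace Ω] (μ : Measure Ω) [IsProbabilityMeasure μ]
    (D : (n : ℕ) → Ω → Fin n → ℕ) (G : (n : ℕ) → Ω → Fin n → Fin n → ℕ)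
    (hsym : ∀ n ω i j, G n ω i j = G n ω j i)
    (hdiag : ∀ n ω i, Even (G n ω i i))
    (hdeg : ∀ n ω i, degOf (G n ω) i = D n ω i)
    -- the limiting degree distribution
    (f : ℕ → ℝ) (hf0 : ∀ k, 0 ≤ f k) (hf1 : HasSum f 1)
    -- Assumption 3 (regularity of the degrees, with total variation for `f^*`)
    (α ε : ℝ) (hα : 0 < α) (hε : 0 < ε)
    (hOmega : (fun n : ℕ =>
        (μ {ω | ENNReal.ofReal ((n : ℝ) ^ (-ε)) <
            max (d1 (empDens (D n ω)) f)
              (dtv (empSB (D n ω)) (sizeBiased f))}).toReal)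
      =O[atTop] fun n : ℕ => (n : ℝ) ^ (-α))
    -- Assumption 2 (regularity of the joint distribution)
    (h : ℕ → ℕ → ℝ) (hh0 : ∀ k l, 0 ≤ h k l)
    (hh1 : HasSum (fun p : ℕ × ℕ => h p.1 p.2) 1)
    (hhsupp : ∀ k, h k 0 = 0 ∧ h 0 k = 0)
    (κ : ℝ) (hκ : 0 < κ)
    (hGamma : Tendsto (fun n : ℕ =>
        (μ {ω | (n : ℝ) ^ (-κ) <
            ∑' k : ℕ, ∑' l : ℕ,
              (if 0 < empDens (D n ω) k then
                |jointDens (D n ω) (G n ω) k l - h k l| else 0)}).toReal)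
      atTop (nhds 0))
    -- finite (1+η)-moment of the limit distribution
    (η : ℝ) (hη0 : 0 < η) (hη1 : η < 1)
    (hmom : Summable fun k : ℕ => (k : ℝ) ^ (1 + η) * f k)
    -- conclusion
    (k : ℕ) (hk : 0 < f k)
    (δ : ℝ) (hδ0 : 0 < δ) (hδ : δ < min ε (min (η / (8 + 4 * η)) κ)) :
    Tendsto (fun n : ℕ =>
        (μ {ω | (n : ℝ) ^ (-δ) <
            |ANNR (D n ω) (G n ω) k -
              (if 0 < f k then
                (∑' l : ℕ, h k l * cdfOf (sizeBiased f) l) / sizeBiased f k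
              else 0)|}).toReal)
      atTop (nhds 0) := by
  rcases Nat.eq_zero_or_pos k with rfl | hk1
  · -- degenerate case k = 0 : both sides are 0
    have hzero : ∀ n ω, ANNR (D n ω) (G n ω) 0 = 0 := by
      intro n ω
      unfold ANNR
      split
      · have hjd : ∀ l, jointDens (D n ω) (G n ω) 0 l = 0 := by
          intro l
          unfold jointDens
          rw [Finset.sum_eq_zero, zero_div]
          intro i _
          apply Finset.sum_eq_zero
          intro j _
          split
          · next hij =>
            have hDi : D n ω i = 0 := hij.1
            have hsum : ∑ j', G n ω i j' = 0 := by
              have hd := hdeg n ω i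
              unfold degOf at hd
              rw [hd, hDi]
            have hz : G n ω i j = 0 :=
              Finset.sum_eq_zero_iff.mp hsum j (Finset.mem_univ j)
            exact_mod_cast congrArg (Nat.cast (R := ℝ)) hz
          · rfl
        simp [hjd]
      · rfl
    have hTheta : (if 0 < f 0 then
        (∑' l : ℕ, h 0 l * cdfOf (sizeBiased f) l) / sizeBiased f 0 else 0) = 0 := by
      rw [if_pos hk]
      have hz : ∀ l, h 0 l * cdfOf (sizeBiased f) l = 0 := fun l => by
        rw [(hhsupp l).2, zero_mul]
      simp [hz]
    have hev : (fun _ : ℕ => (0:ℝ)) =ᶠ[atTop] (fun n => (μ {ω | (n : ℝ) ^ (-δ) <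
        |ANNR (D n ω) (G n ω) 0 -
          (if 0 < f 0 then
            (∑' l : ℕ, h 0 l * cdfOf (sizeBiased f) l) / sizeBiased f 0
          else 0)|}).toReal) := by
      filter_upwards [eventually_ge_atTop 1] with n hn
      have hempty : {ω | (n : ℝ) ^ (-δ) <
          |ANNR (D n ω) (G n ω) 0 -
            (if 0 < f 0 then
              (∑' l : ℕ, h 0 l * cdfOf (sizeBiased f) l) / sizeBiased f 0
            else 0)|} = (∅ : Set Ω) := by
        ext ω
        simp only [Set.mem_setOf_eq, Set.mem_empty_iff_false, iff_false, not_lt]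
        rw [hzero n ω, hTheta]
        simpa using Real.rpow_nonneg (Nat.cast_nonneg n) (-δ)
      rw [hempty]
      simp
    exact Tendsto.congr' hev tendsto_const_nhds
  · -- main case k ≥ 1
    have hkR : (0:ℝ) < k := by exact_mod_cast hk1
    have hksum : Summable (fun j : ℕ => (j:ℝ) * f j) := by
      apply Summable.of_nonneg_of_le
        (fun j => mul_nonneg (Nat.cast_nonneg j) (hf0 j)) _ hmom
      intro j
      rcases Nat.eq_zero_or_pos j with rfl | hj
      · simp only [Nat.cast_zero, zero_mul]
        exact mul_nonneg (Real.rpow_nonneg le_rfl _) (hf0 0)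
      · apply mul_le_mul_of_nonneg_right _ (hf0 j)
        calc (j:ℝ) = (j:ℝ) ^ (1:ℝ) := (Real.rpow_one _).symm
        _ ≤ (j:ℝ) ^ (1+η) :=
            Real.rpow_le_rpow_of_exponent_le (by exact_mod_cast hj) (by linarith)
    have hm : 0 < meanPMF f := by
      have h1 : (k:ℝ) * f k ≤ meanPMF f :=
        Summable.le_tsum hksum k (fun j _ => mul_nonneg (Nat.cast_nonneg j) (hf0 j))
      nlinarith
    have hb : 0 < sizeBiased f k := div_pos (mul_pos hkR hk) hm
    have hcdf0 : ∀ l, 0 ≤ cdfOf (sizeBiased f) l := by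
      intro l; apply Finset.sum_nonneg; intro j _
      exact div_nonneg (mul_nonneg (Nat.cast_nonneg j) (hf0 j)) hm.le
    have hcdf1 : ∀ l, cdfOf (sizeBiased f) l ≤ 1 := by
      intro l
      unfold cdfOf sizeBiased
      rw [← Finset.sum_div, div_le_one hm]
      exact Summable.sum_le_tsum _ (fun j _ => mul_nonneg (Nat.cast_nonneg j) (hf0 j)) hksum
    have hhsum : Summable (fun p : ℕ × ℕ => h p.1 p.2) := hh1.summable
    have hrow : ∀ k', Summable (fun l => h k' l) := fun k' => hhsum.prod_factor k'
    have hrow1 : (∑' l, h k l) ≤ 1 := by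
      rw [← hh1.tsum_eq]
      exact Summable.tsum_le_tsum_of_inj (fun l => (k, l))
        (fun x y hxy => congrArg Prod.snd hxy) (fun c _ => hh0 c.1 c.2)
        (fun l => le_refl _) (hrow k) hhsum
    have hsum2 : Summable (fun l => h k l * cdfOf (sizeBiased f) l) := by
      apply Summable.of_nonneg_of_le
        (fun l => mul_nonneg (hh0 k l) (hcdf0 l)) _ (hrow k)
      intro l
      nlinarith [hh0 k l, hcdf0 l, hcdf1 l]
    have ha0 : 0 ≤ ∑' l, h k l * cdfOf (sizeBiased f) l :=
      tsum_nonneg (fun l => mul_nonneg (hh0 k l) (hcdf0 l))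
    have ha1 : (∑' l, h k l * cdfOf (sizeBiased f) l) ≤ 1 :=
      le_trans (Summable.tsum_le_tsum
        (fun l => by nlinarith [hh0 k l, hcdf0 l, hcdf1 l]) hsum2 (hrow k)) hrow1
    have hδε : δ < ε := lt_of_lt_of_le hδ (min_le_left _ _)
    have hδκ : δ < κ :=
      lt_of_lt_of_le hδ (le_trans (min_le_right _ _) (min_le_right _ _))
    -- eventual bound on the error term
    have hEev : ∀ᶠ n : ℕ in atTop,
        2*((n:ℝ)^(-κ) + 2*(n:ℝ)^(-ε))/(sizeBiased f k)
          + 2*(2*(n:ℝ)^(-ε))/((sizeBiased f k)*(sizeBiased f k)) ≤ (n:ℝ)^(-δ) := by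
      have h1 : Tendsto (fun n:ℕ => ((n:ℝ))^(-(κ-δ))) atTop (nhds 0) :=
        (tendsto_rpow_neg_atTop (by linarith)).comp tendsto_natCast_atTop_atTop
      have h2 : Tendsto (fun n:ℕ => ((n:ℝ))^(-(ε-δ))) atTop (nhds 0) :=
        (tendsto_rpow_neg_atTop (by linarith)).comp tendsto_natCast_atTop_atTop
      have hg : Tendsto (fun n:ℕ =>
          2*((n:ℝ)^(-(κ-δ)) + 2*(n:ℝ)^(-(ε-δ)))/(sizeBiased f k)
            + 2*(2*(n:ℝ)^(-(ε-δ)))/((sizeBiased f k)*(sizeBiased f k)))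
          atTop (nhds 0) := by
        have hcomb := (((h1.add (h2.const_mul 2)).const_mul 2).div_const
            (sizeBiased f k)).add
          (((h2.const_mul 2).const_mul 2).div_const ((sizeBiased f k)*(sizeBiased f k)))
        simpa using hcomb
      filter_upwards [hg.eventually (gt_mem_nhds one_pos), eventually_ge_atTop 1]
        with n hgn hn
      have hn0 : (0:ℝ) < n := by exact_mod_cast hn
      have e1 : (n:ℝ)^(-κ) = (n:ℝ)^(-(κ-δ)) * (n:ℝ)^(-δ) := by
        rw [← Real.rpow_add hn0]; ring_nf
      have e2 : (n:ℝ)^(-ε) = (n:ℝ)^(-(ε-δ)) * (n:ℝ)^(-δ) := by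
        rw [← Real.rpow_add hn0]; ring_nf
      have hd0 : 0 ≤ (n:ℝ)^(-δ) := Real.rpow_nonneg hn0.le _
      have hEeq : 2*((n:ℝ)^(-κ) + 2*(n:ℝ)^(-ε))/(sizeBiased f k)
          + 2*(2*(n:ℝ)^(-ε))/((sizeBiased f k)*(sizeBiased f k))
          = (2*((n:ℝ)^(-(κ-δ)) + 2*(n:ℝ)^(-(ε-δ)))/(sizeBiased f k)
            + 2*(2*(n:ℝ)^(-(ε-δ)))/((sizeBiased f k)*(sizeBiased f k))) * (n:ℝ)^(-δ) := by
        rw [e1, e2]; ring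
      rw [hEeq]
      nlinarith
    -- eventual smallness of 2 n^{-ε}
    have hsmall : ∀ᶠ n : ℕ in atTop, 2*((n:ℝ))^(-ε) ≤ (sizeBiased f k)/2 := by
      have ht : Tendsto (fun n:ℕ => 2*((n:ℝ))^(-ε)) atTop (nhds 0) := by
        have := ((tendsto_rpow_neg_atTop hε).comp
          (tendsto_natCast_atTop_atTop (R := ℝ))).const_mul (2:ℝ)
        simpa using this
      have := ht.eventually (gt_mem_nhds (by linarith : (0:ℝ) < sizeBiased f k / 2))
      filter_upwards [this] with n hn using hn.le
    -- the key event inclusion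
    have hincl : ∀ᶠ n : ℕ in atTop,
        {ω | (n : ℝ) ^ (-δ) <
            |ANNR (D n ω) (G n ω) k -
              (if 0 < f k then
                (∑' l : ℕ, h k l * cdfOf (sizeBiased f) l) / sizeBiased f k
              else 0)|}
        ⊆ {ω | ENNReal.ofReal ((n : ℝ) ^ (-ε)) <
              max (d1 (empDens (D n ω)) f) (dtv (empSB (D n ω)) (sizeBiased f))}
          ∪ {ω | (n : ℝ) ^ (-κ) <
              ∑' k' : ℕ, ∑' l : ℕ,
                (if 0 < empDens (D n ω) k' then
                  |jointDens (D n ω) (G n ω) k' l - h k' l| else 0)} := by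
      filter_upwards [hsmall, hEev, eventually_ge_atTop 1] with n hsm hEn hn1 ω hω
      rw [Set.mem_union]
      by_contra hcon
      push_neg at hcon
      obtain ⟨hA, hG⟩ := hcon
      rw [Set.mem_setOf_eq, not_lt] at hA hG
      have hAle : dtv (empSB (D n ω)) (sizeBiased f) ≤ ENNReal.ofReal ((n:ℝ)^(-ε)) :=
        le_trans (le_max_right _ _) hA
      have hc0 : (0:ℝ) ≤ (n:ℝ)^(-ε) := Real.rpow_nonneg (Nat.cast_nonneg n) _
      have hpt : |empSB (D n ω) k - sizeBiased f k| ≤ 2*(n:ℝ)^(-ε) := by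
        have := dtv_finset_bound hc0 hAle {k}
        simpa using this
      have hcdfb : ∀ l, |empSBcdf (D n ω) l - cdfOf (sizeBiased f) l| ≤ 2*(n:ℝ)^(-ε) := by
        intro l
        rw [empSBcdf_eq_sum]
        unfold cdfOf
        rw [← Finset.sum_sub_distrib]
        refine le_trans (Finset.abs_sum_le_sum_abs _ _) ?_
        exact dtv_finset_bound hc0 hAle _
      have hbn : (sizeBiased f k)/2 ≤ empSB (D n ω) k := by
        have habs := abs_le.mp hpt
        linarith [habs.1]
      have hbnpos : 0 < empSB (D n ω) k := by linarith
      obtain ⟨i, hi⟩ := exists_of_empSB_pos hbnpos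
      have hfnk : 0 < empDens (D n ω) k := empDens_pos_of_exists i hi
      have hsumJD : ∀ k', Summable (fun l => jointDens (D n ω) (G n ω) k' l) := by
        intro k'
        simpa using summable_jointDens_mul (D n ω) (G n ω) k' (fun _ => (1:ℝ))
      have habssum : ∀ k',
          Summable (fun l => |jointDens (D n ω) (G n ω) k' l - h k' l|) := by
        intro k'
        apply Summable.of_nonneg_of_le (fun l => abs_nonneg _) _
          ((hsumJD k').add (hrow k'))
        intro l
        calc |jointDens (D n ω) (G n ω) k' l - h k' l|
            ≤ |jointDens (D n ω) (G n ω) k' l| + |h k' l| := abs_sub _ _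
        _ = jointDens (D n ω) (G n ω) k' l + h k' l := by
            rw [abs_of_nonneg (jointDens_nonneg _ _ _ _), abs_of_nonneg (hh0 k' l)]
      have houter : Summable (fun k' => if 0 < empDens (D n ω) k' then
          ∑' l, |jointDens (D n ω) (G n ω) k' l - h k' l| else 0) := by
        apply summable_of_ne_finset_zero (s := Finset.range (degSum (D n ω) + 1))
        intro k' hk'
        rw [if_neg]
        intro hpos
        obtain ⟨i', hi'⟩ := exists_of_empDens_pos hpos
        have h1 : D n ω i' ≤ ∑ i'', D n ω i'' :=
          Finset.single_le_sum (fun _ _ => Nat.zero_le _) (Finset.mem_univ i')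
        have h2 : D n ω i' ≤ degSum (D n ω) := h1
        simp only [Finset.mem_range] at hk'
        omega
      have hgam : (∑' l, |jointDens (D n ω) (G n ω) k l - h k l|) ≤ (n:ℝ)^(-κ) := by
        have h1 : (if 0 < empDens (D n ω) k then
            ∑' l, |jointDens (D n ω) (G n ω) k l - h k l| else 0)
            ≤ ∑' k', (if 0 < empDens (D n ω) k' then
              ∑' l, |jointDens (D n ω) (G n ω) k' l - h k' l| else 0) :=
          Summable.le_tsum houter k (fun j _ => by
            split
            · exact tsum_nonneg (fun _ => abs_nonneg _)
            · exact le_refl 0)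
        rw [if_pos hfnk] at h1
        refine le_trans h1 (le_trans (le_of_eq (tsum_congr (fun k' => ?_))) hG)
        split <;> simp
      have hsum1 : Summable (fun l => jointDens (D n ω) (G n ω) k l * empSBcdf (D n ω) l) :=
        summable_jointDens_mul _ _ _ _
      have hAn : |(∑' l, jointDens (D n ω) (G n ω) k l * empSBcdf (D n ω) l)
          - ∑' l, h k l * cdfOf (sizeBiased f) l| ≤ (n:ℝ)^(-κ) + 2*(n:ℝ)^(-ε) := by
        rw [← Summable.tsum_sub hsum1 hsum2]
        have hsumdiff : Summable (fun l => |jointDens (D n ω) (G n ω) k l * empSBcdf (D n ω) l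
            - h k l * cdfOf (sizeBiased f) l|) := (hsum1.sub hsum2).abs
        have hsumrhs : Summable (fun l => |jointDens (D n ω) (G n ω) k l - h k l|
            + h k l * (2*(n:ℝ)^(-ε))) := (habssum k).add ((hrow k).mul_right _)
        have hptw : ∀ l, |jointDens (D n ω) (G n ω) k l * empSBcdf (D n ω) l
            - h k l * cdfOf (sizeBiased f) l|
            ≤ |jointDens (D n ω) (G n ω) k l - h k l| + h k l * (2*(n:ℝ)^(-ε)) := by
          intro l
          have e : jointDens (D n ω) (G n ω) k l * empSBcdf (D n ω) l
              - h k l * cdfOf (sizeBiased f) l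
              = (jointDens (D n ω) (G n ω) k l - h k l) * empSBcdf (D n ω) l
                + h k l * (empSBcdf (D n ω) l - cdfOf (sizeBiased f) l) := by ring
          rw [e]
          calc |(jointDens (D n ω) (G n ω) k l - h k l) * empSBcdf (D n ω) l
              + h k l * (empSBcdf (D n ω) l - cdfOf (sizeBiased f) l)|
              ≤ |(jointDens (D n ω) (G n ω) k l - h k l) * empSBcdf (D n ω) l|
                + |h k l * (empSBcdf (D n ω) l - cdfOf (sizeBiased f) l)| := abs_add_le _ _
          _ = |jointDens (D n ω) (G n ω) k l - h k l| * empSBcdf (D n ω) l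
                + h k l * |empSBcdf (D n ω) l - cdfOf (sizeBiased f) l| := by
              rw [abs_mul, abs_mul, abs_of_nonneg (empSBcdf_nonneg _ _),
                abs_of_nonneg (hh0 k l)]
          _ ≤ |jointDens (D n ω) (G n ω) k l - h k l| * 1 + h k l * (2*(n:ℝ)^(-ε)) := by
              gcongr
              · exact empSBcdf_le_one _ _
              · exact hh0 k l
              · exact hcdfb l
          _ = |jointDens (D n ω) (G n ω) k l - h k l| + h k l * (2*(n:ℝ)^(-ε)) := by ring
        calc |∑' l, (jointDens (D n ω) (G n ω) k l * empSBcdf (D n ω) l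
            - h k l * cdfOf (sizeBiased f) l)|
            ≤ ∑' l, |jointDens (D n ω) (G n ω) k l * empSBcdf (D n ω) l
              - h k l * cdfOf (sizeBiased f) l| := by
              simpa [Real.norm_eq_abs] using
                norm_tsum_le_tsum_norm (f := fun l => jointDens (D n ω) (G n ω) k l * empSBcdf (D n ω) l
                  - h k l * cdfOf (sizeBiased f) l) (by simpa [Real.norm_eq_abs] using hsumdiff)
        _ ≤ ∑' l, (|jointDens (D n ω) (G n ω) k l - h k l| + h k l * (2*(n:ℝ)^(-ε))) :=
              Summable.tsum_le_tsum hptw hsumdiff hsumrhs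
        _ = (∑' l, |jointDens (D n ω) (G n ω) k l - h k l|)
              + (∑' l, h k l * (2*(n:ℝ)^(-ε))) := Summable.tsum_add (habssum k) ((hrow k).mul_right _)
        _ = (∑' l, |jointDens (D n ω) (G n ω) k l - h k l|)
              + (∑' l, h k l) * (2*(n:ℝ)^(-ε)) := by rw [tsum_mul_right]
        _ ≤ (n:ℝ)^(-κ) + 1 * (2*(n:ℝ)^(-ε)) := by
              have h2e : (0:ℝ) ≤ 2*(n:ℝ)^(-ε) := by positivity
              have := mul_le_mul_of_nonneg_right hrow1 h2e
              linarith [hgam]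
        _ = (n:ℝ)^(-κ) + 2*(n:ℝ)^(-ε) := by ring
      have hfinal := ratio_bound hb hbn ha0 ha1 hAn hpt
      rw [Set.mem_setOf_eq, ANNR, if_pos hfnk, if_pos hk] at hω
      exact absurd hω (not_lt.mpr (le_trans hfinal hEn))
    -- conclude by squeezing
    have hA0 : Tendsto (fun n : ℕ => (μ {ω | ENNReal.ofReal ((n : ℝ) ^ (-ε)) <
        max (d1 (empDens (D n ω)) f) (dtv (empSB (D n ω)) (sizeBiased f))}).toReal)
        atTop (nhds 0) :=
      hOmega.trans_tendsto
        ((tendsto_rpow_neg_atTop hα).comp tendsto_natCast_atTop_atTop)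
    apply squeeze_zero' (Eventually.of_forall (fun n => ENNReal.toReal_nonneg))
      (g := fun n : ℕ => (μ {ω | ENNReal.ofReal ((n : ℝ) ^ (-ε)) <
          max (d1 (empDens (D n ω)) f) (dtv (empSB (D n ω)) (sizeBiased f))}).toReal
        + (μ {ω | (n : ℝ) ^ (-κ) <
            ∑' k' : ℕ, ∑' l : ℕ,
              (if 0 < empDens (D n ω) k' then
                |jointDens (D n ω) (G n ω) k' l - h k' l| else 0)}).toReal)
    · filter_upwards [hincl] with n hsub
      calc (μ {ω | (n : ℝ) ^ (-δ) <
            |ANNR (D n ω) (G n ω) k -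
              (if 0 < f k then
                (∑' l : ℕ, h k l * cdfOf (sizeBiased f) l) / sizeBiased f k
              else 0)|}).toReal
          ≤ (μ ({ω | ENNReal.ofReal ((n : ℝ) ^ (-ε)) <
              max (d1 (empDens (D n ω)) f) (dtv (empSB (D n ω)) (sizeBiased f))}
            ∪ {ω | (n : ℝ) ^ (-κ) <
              ∑' k' : ℕ, ∑' l : ℕ,
                (if 0 < empDens (D n ω) k' then
                  |jointDens (D n ω) (G n ω) k' l - h k' l| else 0)})).toReal :=
            ENNReal.toReal_mono (measure_ne_top μ _) (measure_mono hsub)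
      _ ≤ ((μ {ω | ENNReal.ofReal ((n : ℝ) ^ (-ε)) <
              max (d1 (empDens (D n ω)) f) (dtv (empSB (D n ω)) (sizeBiased f))})
            + (μ {ω | (n : ℝ) ^ (-κ) <
              ∑' k' : ℕ, ∑' l : ℕ,
                (if 0 < empDens (D n ω) k' then
                  |jointDens (D n ω) (G n ω) k' l - h k' l| else 0)})).toReal :=
            ENNReal.toReal_mono
              (ENNReal.add_ne_top.mpr ⟨measure_ne_top μ _, measure_ne_top μ _⟩)
              (measure_union_le _ _)
      _ = _ := ENNReal.toReal_add (measure_ne_top μ _) (measure_ne_top μ _)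
    · simpa using hA0.add hGamma

end ANNDPaper
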